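/- Marginal coverage guarantee of conformal prediction: Let (X_1, Y_1), ..., (X_n, Y_n), (X_{n+1}, Y_{n+1}) be exchangeable random vectors taking values in 𝒳 × 𝒴, let s : 𝒳 × 𝒴 → ℝ be a measurable non-conformity score function, and suppose the scores ε_i = s(X_i, Y_i), i = 1, ..., n+1, have no ties almost surely. For α ∈ (1/(n+1), 1), set q̂ = ε_{(⌈(n+1)(1−α)⌉)}, the ⌈(n+1)(1−α)⌉-th order statistic of ε_1, ..., ε_n, and define the conformal prediction set C_{1−α}(X_{n+1}) = { y ∈ 𝒴 : s(X_{n+1}, y) ≤ q̂ }. Then 1 − α ≤ P(Y_{n+1} ∈ C_{1−α}(X_{n+1})) ≤ 1 − α + 1/(n+1). -/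

import Mathlib

open MeasureTheory
open scoped ENNReal

/-- A finite family of random variables is exchangeable if every permutation of the
indices leaves the joint distribution unchanged. -/
def Exchangeable {Ω 𝒵 : Type*} [MeasurableSpace Ω] [MeasurableSpace 𝒵]
    (μ : Measure Ω) {n : ℕ} (Z : Fin n → Ω → 𝒵) : Prop :=
  ∀ π : Equiv.Perm (Fin n),
    Measure.map (fun ω => fun i => Z (π i) ω) μ = Measure.map (fun ω => fun i => Z i ω) μ

/-- The `k`-th order statistic (0-indexed) of the values `v 0, ..., v (m-1)`:
the `(k+1)`-th smallest value. -/
noncomputable def orderStat {m : ℕ} (v : Fin m → ℝ) (k : Fin m) : ℝ :=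
  ((List.ofFn v).insertionSort (· ≤ ·)).get
    (Fin.cast (by simp) k)

section Aux
open Finset

lemma card_filter_eq_countP' {m : ℕ} (p : Fin m → Prop) [DecidablePred p] :
    (Finset.univ.filter p).card = (List.finRange m).countP (fun i => decide (p i)) := by
  rw [Finset.card_filter, Fin.univ_def]
  erw [Finset.sum_mk]
  rw [← Multiset.coe_countP,
    Multiset.countP_eq_card_filter, Multiset.filter_coe]
  simp only [Multiset.map_coe, Multiset.sum_coe]
  generalize (List.finRange m) = l
  induction l with
  | nil => simp
  | cons a l ih => by_cases h : p a <;> simp [h, ih, Nat.add_comm]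

lemma card_filter_eq_countP_ofFn' {m : ℕ} (v : Fin m → ℝ) (t : ℝ) :
    (Finset.univ.filter (fun i => v i < t)).card
      = (List.ofFn v).countP (fun x => decide (x < t)) := by
  rw [List.ofFn_eq_map, List.countP_map, card_filter_eq_countP']
  rfl

lemma le_orderStat_iff {m : ℕ} (v : Fin m → ℝ) (k : ℕ) (hk : k < m) (t : ℝ) :
    t ≤ orderStat v ⟨k, hk⟩ ↔ (Finset.univ.filter fun i => v i < t).card ≤ k := by
  set L := (List.ofFn v).insertionSort (· ≤ ·) with hL
  have hsort : L.Pairwise (· ≤ ·) := List.pairwise_insertionSort _ _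
  have hperm : List.Perm L (List.ofFn v) := List.perm_insertionSort _ _
  have hlen : L.length = m := by rw [hperm.length_eq, List.length_ofFn]
  have hkL : k < L.length := hlen ▸ hk
  have hcard : (Finset.univ.filter fun i => v i < t).card
      = L.countP (fun x => decide (x < t)) := by
    rw [card_filter_eq_countP_ofFn', hperm.countP_eq]
  have horder : orderStat v ⟨k, hk⟩ = L.get ⟨k, hkL⟩ := rfl
  rw [horder, hcard]
  have hmono : ∀ i j : Fin L.length, (i : ℕ) ≤ j → L.get i ≤ L.get j := by
    intro i j hij
    rcases eq_or_lt_of_le hij with h | h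
    · have : i = j := Fin.ext h
      rw [this]
    · exact List.pairwise_iff_get.mp hsort i j (by exact h)
  constructor
  · intro ht
    have hsplit := List.take_append_drop k L
    have : L.countP (fun x => decide (x < t))
        = (L.take k).countP (fun x => decide (x < t))
          + (L.drop k).countP (fun x => decide (x < t)) := by
      conv_lhs => rw [← hsplit]
      rw [List.countP_append]
    rw [this]
    have h1 : (L.take k).countP (fun x => decide (x < t)) ≤ k :=
      le_trans List.countP_le_length (by simp)
    have h2 : (L.drop k).countP (fun x => decide (x < t)) = 0 := by
      rw [List.countP_eq_zero]
      intro a ha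
      obtain ⟨j, hj, rfl⟩ := List.mem_iff_getElem.mp ha
      rw [List.getElem_drop]
      have hkj : k + j < L.length := by
        have := hj; rw [List.length_drop] at this; omega
      have : L.get ⟨k, hkL⟩ ≤ L.get ⟨k + j, hkj⟩ := hmono _ _ (by simp)
      simp only [decide_eq_true_eq]
      exact not_lt.mpr (le_trans ht this)
    omega
  · intro hcount
    by_contra ht
    push_neg at ht
    have hall : (L.take (k+1)).countP (fun x => decide (x < t)) = k + 1 := by
      have hlt : ∀ a ∈ L.take (k+1), a < t := by
        intro a ha
        obtain ⟨j, hj, rfl⟩ := List.mem_iff_getElem.mp ha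
        rw [List.getElem_take]
        have hjL : j < L.length := by
          rw [List.length_take] at hj; omega
        have hjk : j ≤ k := by rw [List.length_take] at hj; omega
        calc L[j] = L.get ⟨j, hjL⟩ := rfl
          _ ≤ L.get ⟨k, hkL⟩ := hmono _ _ hjk
          _ < t := ht
      rw [List.countP_eq_length.mpr (by intro a ha; simpa using hlt a ha)]
      rw [List.length_take]
      omega
    have : k + 1 ≤ L.countP (fun x => decide (x < t)) := by
      conv_rhs => rw [← List.take_append_drop (k+1) L]
      rw [List.countP_append, hall]
      omega
    omega

lemma card_filter_castSucc {n : ℕ} (w : Fin (n+1) → ℝ) :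
    (univ.filter fun i : Fin (n+1) => w i < w (Fin.last n)).card
      = (univ.filter fun i : Fin n => w i.castSucc < w (Fin.last n)).card := by
  rw [Finset.card_filter, Finset.card_filter, Fin.sum_univ_castSucc]
  simp

lemma card_filter_perm {m : ℕ} (π : Equiv.Perm (Fin m)) (p : Fin m → Prop) [DecidablePred p] :
    (univ.filter fun i => p (π i)).card = (univ.filter p).card := by
  apply Finset.card_bij (fun i _ => π i)
  · intro a ha; simp at ha ⊢; exact ha
  · intro a ha b hb hab; exact π.injective hab
  · intro b hb; exact ⟨π.symm b, by simpa using hb, by simp⟩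

lemma rank_existsUnique {m : ℕ} (v : Fin m → ℝ) (hv : Function.Injective v)
    (r : ℕ) (hr : r < m) :
    ∃! j, (univ.filter fun i => v i < v j).card = r := by
  have hinj : Function.Injective (fun j => (univ.filter fun i => v i < v j).card) := by
    intro a b hab
    by_contra hne
    rcases lt_or_gt_of_ne (fun h : v a = v b => hne (hv h)) with h | h
    · have hss : (univ.filter fun i => v i < v a) ⊂ (univ.filter fun i => v i < v b) := by
        constructor
        · intro i hi; simp at hi ⊢; exact hi.trans h
        · intro hsub
          have := hsub (by simp [h] : a ∈ univ.filter fun i => v i < v b)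
          simp at this
      exact absurd hab (Nat.ne_of_lt (Finset.card_lt_card hss))
    · have hss : (univ.filter fun i => v i < v b) ⊂ (univ.filter fun i => v i < v a) := by
        constructor
        · intro i hi; simp at hi ⊢; exact hi.trans h
        · intro hsub
          have := hsub (by simp [h] : b ∈ univ.filter fun i => v i < v a)
          simp at this
      exact absurd hab.symm (Nat.ne_of_lt (Finset.card_lt_card hss))
  have hbound : ∀ j, (univ.filter fun i => v i < v j).card < m := by
    intro j
    have : (univ.filter fun i => v i < v j) ⊆ univ.erase j := by
      intro i hi
      simp at hi
      refine Finset.mem_erase.mpr ⟨fun h => ?_, Finset.mem_univ _⟩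
      subst h; exact lt_irrefl _ hi
    calc (univ.filter fun i => v i < v j).card ≤ (univ.erase j).card :=
          Finset.card_le_card this
      _ < univ.card := Finset.card_erase_lt_of_mem (Finset.mem_univ j)
      _ = m := by simp
  set F : Fin m → Fin m := fun j => ⟨_, hbound j⟩ with hF
  have hFinj : Function.Injective F := by
    intro a b hab
    apply hinj
    exact congrArg Fin.val hab
  have hFsurj : Function.Surjective F := Finite.surjective_of_injective hFinj
  obtain ⟨j, hj⟩ := hFsurj ⟨r, hr⟩
  refine ⟨j, congrArg Fin.val hj, fun y hy => hinj (hy.trans (congrArg Fin.val hj).symm)⟩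

lemma measurable_rankCount {Ω : Type*} [MeasurableSpace Ω] {m : ℕ}
    (f : Fin m → Ω → ℝ) (hf : ∀ i, Measurable (f i)) (j : Fin m) :
    Measurable (fun ω => (univ.filter fun i => f i ω < f j ω).card) := by
  have h : (fun ω => (univ.filter fun i => f i ω < f j ω).card)
      = fun ω => ∑ i : Fin m, if f i ω < f j ω then 1 else 0 :=
    funext fun ω => Finset.card_filter _ _
  rw [h]
  exact Finset.measurable_sum _ fun i _ =>
    Measurable.ite (measurableSet_lt (hf i) (hf j)) measurable_const measurable_const

end Aux

/-- Marginal coverage guarantee of (split) conformal prediction: if the pairs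
`(X i, Y i)`, `i = 1, ..., n+1`, are exchangeable, `s` is a measurable non-conformity
score whose scores have no ties almost surely, `α ∈ (1/(n+1), 1)`, and `q̂` is the
`⌈(n+1)(1-α)⌉`-th order statistic (1-indexed) of the first `n` scores, then the
prediction set `C(x) = {y | s (x, y) ≤ q̂}` satisfies
`1 - α ≤ P(Y (n+1) ∈ C (X (n+1))) ≤ 1 - α + 1/(n+1)`. -/
theorem conformal_marginal_coverage {Ω 𝒳 𝒴 : Type*} [MeasurableSpace Ω]
    [MeasurableSpace 𝒳] [MeasurableSpace 𝒴]
    (μ : Measure Ω) [IsProbabilityMeasure μ] {n : ℕ}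
    (X : Fin (n + 1) → Ω → 𝒳) (Y : Fin (n + 1) → Ω → 𝒴)
    (hX : ∀ i, Measurable (X i)) (hY : ∀ i, Measurable (Y i))
    (hexch : Exchangeable μ (fun i ω => (X i ω, Y i ω)))
    (s : 𝒳 × 𝒴 → ℝ) (hs : Measurable s)
    (hties : ∀ i j, i ≠ j → μ {ω | s (X i ω, Y i ω) = s (X j ω, Y j ω)} = 0)
    (α : ℝ) (hα1 : 1 / ((n : ℝ) + 1) < α) (hα2 : α < 1) :
    μ {ω | Y (Fin.last n) ω ∈ {y : 𝒴 | s (X (Fin.last n) ω, y) ≤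
        orderStat (fun i : Fin n => s (X i.castSucc ω, Y i.castSucc ω))
          ⟨⌈((n : ℝ) + 1) * (1 - α)⌉₊ - 1, by
            have hn : (0 : ℝ) < (n : ℝ) + 1 := by positivity
            have h1 : (1 : ℝ) < α * ((n : ℝ) + 1) := (div_lt_iff₀ hn).mp hα1
            have hx : ((n : ℝ) + 1) * (1 - α) < (n : ℝ) := by nlinarith
            have hceil : ⌈((n : ℝ) + 1) * (1 - α)⌉₊ ≤ n := Nat.ceil_le.mpr hx.le
            have hpos : 0 < ⌈((n : ℝ) + 1) * (1 - α)⌉₊ := by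
              rw [Nat.ceil_pos]; nlinarith
            omega⟩}} ∈
      Set.Icc (ENNReal.ofReal (1 - α)) (ENNReal.ofReal (1 - α + 1 / ((n : ℝ) + 1))) := by
  classical
  open Finset in
  have hn : (0 : ℝ) < (n : ℝ) + 1 := by positivity
  have h1 : (1 : ℝ) < α * ((n : ℝ) + 1) := (div_lt_iff₀ hn).mp hα1
  have hxlt : ((n : ℝ) + 1) * (1 - α) < (n : ℝ) := by nlinarith
  set k := ⌈((n : ℝ) + 1) * (1 - α)⌉₊ with hkdef
  have hkn : k ≤ n := Nat.ceil_le.mpr hxlt.le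
  have hkpos : 0 < k := by rw [hkdef]; rw [Nat.ceil_pos]; nlinarith
  have hk1 : k - 1 < n := by omega
  set ε : Fin (n + 1) → Ω → ℝ := fun i ω => s (X i ω, Y i ω) with hεdef
  have hεm : ∀ i, Measurable (ε i) := fun i => hs.comp ((hX i).prodMk (hY i))
  set R : Fin (n + 1) → Ω → ℕ :=
    fun j ω => (Finset.univ.filter fun i => ε i ω < ε j ω).card with hRdef
  have hRm : ∀ j, Measurable (R j) := fun j => measurable_rankCount ε hεm j
  -- Step 1: identify the event with a rank event
  have hev : {ω | Y (Fin.last n) ω ∈ {y : 𝒴 | s (X (Fin.last n) ω, y) ≤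
        orderStat (fun i : Fin n => s (X i.castSucc ω, Y i.castSucc ω)) ⟨k - 1, hk1⟩}}
      = {ω | R (Fin.last n) ω < k} := by
    ext ω
    show s (X (Fin.last n) ω, Y (Fin.last n) ω) ≤
        orderStat (fun i : Fin n => s (X i.castSucc ω, Y i.castSucc ω)) ⟨k - 1, hk1⟩
      ↔ R (Fin.last n) ω < k
    rw [le_orderStat_iff]
    have hcc : R (Fin.last n) ω =
        (Finset.univ.filter fun i : Fin n =>
          s (X i.castSucc ω, Y i.castSucc ω) < s (X (Fin.last n) ω, Y (Fin.last n) ω)).card :=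
      card_filter_castSucc (fun i => ε i ω)
    rw [← hcc]
    omega
  -- Step 2: the joint law of the scores is exchangeable
  set Z : Ω → (Fin (n + 1) → ℝ) := fun ω => fun i => ε i ω with hZdef
  have hZm : Measurable Z := measurable_pi_lambda _ hεm
  have hg : Measurable (fun v : Fin (n + 1) → 𝒳 × 𝒴 => fun i => s (v i)) :=
    measurable_pi_lambda _ fun i => hs.comp (measurable_pi_apply i)
  have hmapeq : ∀ π : Equiv.Perm (Fin (n + 1)),
      Measure.map (fun ω => fun i => ε (π i) ω) μ = Measure.map Z μ := by
    intro π
    have hW : Measurable (fun ω => fun i : Fin (n + 1) => (X (π i) ω, Y (π i) ω)) :=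
      measurable_pi_lambda _ fun i => (hX (π i)).prodMk (hY (π i))
    have hW' : Measurable (fun ω => fun i : Fin (n + 1) => (X i ω, Y i ω)) :=
      measurable_pi_lambda _ fun i => (hX i).prodMk (hY i)
    calc Measure.map (fun ω => fun i => ε (π i) ω) μ
        = Measure.map ((fun v : Fin (n + 1) → 𝒳 × 𝒴 => fun i => s (v i)) ∘
            (fun ω => fun i => (X (π i) ω, Y (π i) ω))) μ := rfl
      _ = Measure.map (fun v : Fin (n + 1) → 𝒳 × 𝒴 => fun i => s (v i))
            (Measure.map (fun ω => fun i => (X (π i) ω, Y (π i) ω)) μ) :=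
          (Measure.map_map hg hW).symm
      _ = Measure.map (fun v : Fin (n + 1) → 𝒳 × 𝒴 => fun i => s (v i))
            (Measure.map (fun ω => fun i => (X i ω, Y i ω)) μ) := by rw [hexch π]
      _ = Measure.map ((fun v : Fin (n + 1) → 𝒳 × 𝒴 => fun i => s (v i)) ∘
            (fun ω => fun i => (X i ω, Y i ω))) μ := Measure.map_map hg hW'
      _ = Measure.map Z μ := rfl
  -- measurability of the rank sets in the product space
  have hSm : ∀ r : ℕ, MeasurableSet {v : Fin (n + 1) → ℝ |
      (Finset.univ.filter fun i => v i < v (Fin.last n)).card = r} := by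
    intro r
    exact measurable_rankCount (fun i (v : Fin (n + 1) → ℝ) => v i)
      (fun i => measurable_pi_apply i) (Fin.last n) (measurableSet_singleton r)
  -- Step 3: all ranks have the same distribution
  have hswap : ∀ (j : Fin (n + 1)) (r : ℕ),
      μ {ω | R j ω = r} = μ {ω | R (Fin.last n) ω = r} := by
    intro j r
    set π := Equiv.swap j (Fin.last n) with hπ
    set Sr := {v : Fin (n + 1) → ℝ |
      (Finset.univ.filter fun i => v i < v (Fin.last n)).card = r} with hSr
    have hWm : Measurable (fun ω => fun i => ε (π i) ω) :=
      measurable_pi_lambda _ fun i => hεm (π i)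
    have h5 : (fun ω => fun i => ε (π i) ω) ⁻¹' Sr = {ω | R j ω = r} := by
      ext ω
      show (Finset.univ.filter fun i => ε (π i) ω < ε (π (Fin.last n)) ω).card = r
        ↔ R j ω = r
      rw [show π (Fin.last n) = j from Equiv.swap_apply_right _ _]
      rw [card_filter_perm π (fun i => ε i ω < ε j ω)]
    calc μ {ω | R j ω = r} = μ ((fun ω => fun i => ε (π i) ω) ⁻¹' Sr) := by rw [h5]
      _ = Measure.map (fun ω => fun i => ε (π i) ω) μ Sr :=
          (Measure.map_apply hWm (hSm r)).symm
      _ = Measure.map Z μ Sr := by rw [hmapeq π]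
      _ = μ (Z ⁻¹' Sr) := Measure.map_apply hZm (hSm r)
      _ = μ {ω | R (Fin.last n) ω = r} := rfl
  -- Step 4: the a.s. distinctness set
  set D : Set Ω := {ω | Function.Injective fun i => ε i ω} with hDdef
  have hDeq : D = ⋂ (i : Fin (n + 1)) (j : Fin (n + 1)) (_ : i ≠ j),
      {ω | ε i ω = ε j ω}ᶜ := by
    ext ω
    simp only [Set.mem_iInter, Set.mem_compl_iff, Set.mem_setOf_eq, hDdef]
    constructor
    · intro h i j hij hEq; exact hij (h hEq)
    · intro h a b hab; by_contra hne; exact h a b hne hab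
  have hDm : MeasurableSet D := by
    rw [hDeq]
    exact MeasurableSet.iInter fun i => MeasurableSet.iInter fun j =>
      MeasurableSet.iInter fun _ => (measurableSet_eq_fun (hεm i) (hεm j)).compl
  have hDc : μ Dᶜ = 0 := by
    rw [hDeq]
    rw [Set.compl_iInter]
    refine measure_iUnion_null fun i => ?_
    rw [Set.compl_iInter]
    refine measure_iUnion_null fun j => ?_
    rw [Set.compl_iInter]
    refine measure_iUnion_null fun hij => ?_
    rw [compl_compl]
    exact hties i j hij
  have hD1 : μ D = 1 := by
    have h := measure_compl hDm (measure_ne_top μ D)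
    rw [hDc, measure_univ] at h
    have hle : μ D ≤ 1 := prob_le_one
    have := tsub_eq_zero_iff_le.mp h.symm
    exact le_antisymm hle this
  -- Step 5: the rank of the last score is uniform
  have huni : ∀ r : ℕ, r < n + 1 →
      μ {ω | R (Fin.last n) ω = r} = (((n : ℝ≥0∞) + 1))⁻¹ := by
    intro r hr
    have hdisj : ((Finset.univ : Finset (Fin (n + 1))) : Set (Fin (n + 1))).PairwiseDisjoint
        (fun j => {ω | R j ω = r} ∩ D) := by
      intro a _ b _ hab
      refine Set.disjoint_left.mpr ?_
      rintro ω ⟨ha, hωD⟩ ⟨hb, _⟩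
      exact hab ((rank_existsUnique (fun i => ε i ω) hωD r hr).unique ha hb)
    have hmeas : ∀ j ∈ (Finset.univ : Finset (Fin (n + 1))),
        MeasurableSet ({ω | R j ω = r} ∩ D) := fun j _ =>
      ((hRm j) (measurableSet_singleton r)).inter hDm
    have hsum := measure_biUnion_finset (μ := μ) hdisj hmeas
    have hcover : ⋃ j ∈ (Finset.univ : Finset (Fin (n + 1))), ({ω | R j ω = r} ∩ D) = D := by
      ext ω
      simp only [Set.mem_iUnion, Finset.mem_univ, Set.mem_inter_iff, Set.mem_setOf_eq,
        exists_prop, true_and]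
      constructor
      · rintro ⟨j, _, hωD⟩; exact hωD
      · intro hω
        obtain ⟨j, hj, _⟩ := rank_existsUnique (fun i => ε i ω) hω r hr
        exact ⟨j, hj, hω⟩
    rw [hcover, hD1] at hsum
    have heach : ∀ j ∈ (Finset.univ : Finset (Fin (n + 1))),
        μ ({ω | R j ω = r} ∩ D) = μ {ω | R (Fin.last n) ω = r} := fun j _ =>
      (measure_inter_conull hDc).trans (hswap j r)
    rw [Finset.sum_congr rfl heach, Finset.sum_const, Finset.card_univ, Fintype.card_fin,
      nsmul_eq_mul] at hsum
    have hne : ((n + 1 : ℕ) : ℝ≥0∞) ≠ 0 := by simp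
    have hnt : ((n + 1 : ℕ) : ℝ≥0∞) ≠ ⊤ := by simp
    have : μ {ω | R (Fin.last n) ω = r}
        = ((n + 1 : ℕ) : ℝ≥0∞)⁻¹ * (((n + 1 : ℕ) : ℝ≥0∞) * μ {ω | R (Fin.last n) ω = r}) := by
      rw [← mul_assoc, ENNReal.inv_mul_cancel hne hnt, one_mul]
    rw [this, ← hsum, mul_one]
    congr 1
    push_cast
    ring
  -- Step 6: compute the probability
  have hsplitE : {ω | R (Fin.last n) ω < k}
      = ⋃ r ∈ Finset.range k, {ω | R (Fin.last n) ω = r} := by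
    ext ω
    simp only [Set.mem_iUnion, Finset.mem_range, Set.mem_setOf_eq, exists_prop]
    constructor
    · intro h; exact ⟨R (Fin.last n) ω, h, rfl⟩
    · rintro ⟨r, hr, h⟩; omega
  have hdisjE : ((Finset.range k : Finset ℕ) : Set ℕ).PairwiseDisjoint
      (fun r => {ω | R (Fin.last n) ω = r}) := by
    intro a _ b _ hab
    refine Set.disjoint_left.mpr ?_
    rintro ω ha hb
    exact hab ((ha.symm).trans hb)
  have hmeasE : ∀ r ∈ Finset.range k, MeasurableSet {ω | R (Fin.last n) ω = r} :=
    fun r _ => (hRm (Fin.last n)) (measurableSet_singleton r)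
  have hμE : μ {ω | R (Fin.last n) ω < k} = (k : ℝ≥0∞) * ((n : ℝ≥0∞) + 1)⁻¹ := by
    rw [hsplitE, measure_biUnion_finset hdisjE hmeasE]
    rw [Finset.sum_congr rfl (fun r hr => huni r (by
      have := Finset.mem_range.mp hr; omega))]
    rw [Finset.sum_const, Finset.card_range, nsmul_eq_mul]
  -- Step 7: conclude
  rw [hev, hμE]
  have hofReal : (k : ℝ≥0∞) * ((n : ℝ≥0∞) + 1)⁻¹
      = ENNReal.ofReal ((k : ℝ) / ((n : ℝ) + 1)) := by
    rw [ENNReal.ofReal_div_of_pos hn, div_eq_mul_inv]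
    congr 1
    · exact (ENNReal.ofReal_natCast k).symm
    · congr 1
      rw [show ((n : ℝ) + 1) = ((n + 1 : ℕ) : ℝ) by push_cast; ring,
        ENNReal.ofReal_natCast]
      push_cast
      ring
  rw [hofReal]
  have hkle : ((n : ℝ) + 1) * (1 - α) ≤ (k : ℝ) := Nat.le_ceil _
  have hklt : (k : ℝ) < ((n : ℝ) + 1) * (1 - α) + 1 :=
    Nat.ceil_lt_add_one (by nlinarith)
  constructor
  · apply ENNReal.ofReal_le_ofReal
    rw [le_div_iff₀ hn]
    nlinarith
  · apply ENNReal.ofReal_le_ofReal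
    rw [div_le_iff₀ hn]
    have hinv : (1 / ((n : ℝ) + 1)) * ((n : ℝ) + 1) = 1 := by field_simp
    nlinarith [hklt, hinv]
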